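/- For P(t) = t² - 2bt + 1 with b ≠ ±1, the ring R_2(P) = ℂ[t,t⁻¹,u]/(u² - (t² - 2bt + 1)) is isomorphic as a ℂ-algebra to ℂ[s, s⁻¹, (s+b+1)⁻¹, (s+b-1)⁻¹]. -/

import Mathlib

open Polynomial
open LaurentPolynomial (T)

noncomputable section Stmt7Aux

/-- Extensionality for `ℂ`-algebra maps out of Laurent polynomials. -/
lemma stmt7_laurent_algHom_ext {A : Type*} [CommSemiring A] [Algebra ℂ A]
    {f g : LaurentPolynomial ℂ →ₐ[ℂ] A}
    (h1 : f (T 1) = g (T 1)) (h2 : f (T (-1)) = g (T (-1))) : f = g := by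
  have key : ∀ n : ℤ, f (T n) = g (T n) := by
    intro n
    induction n using Int.induction_on with
    | zero => simp [LaurentPolynomial.T_zero]
    | succ n ih =>
        have : ((n : ℤ) + 1) = (n : ℤ) + 1 := rfl
        rw [LaurentPolynomial.T_add, map_mul, map_mul, ih, h1]
    | pred n ih =>
        have hE : (-(n : ℤ) - 1) = (-(n : ℤ)) + (-1) := by ring
        rw [hE, LaurentPolynomial.T_add, map_mul, map_mul, ih, h2]
  apply AddMonoidAlgebra.algHom_ext
  intro x
  exact key x
  exact Subsingleton.elim _ _

variable (b : ℂ)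

abbrev stmt7A := Polynomial (LaurentPolynomial ℂ) ⧸
  Ideal.span {(X : Polynomial (LaurentPolynomial ℂ)) ^ 2 -
    C (Polynomial.toLaurent (X ^ 2 - C (2 * b) * X + 1))}

abbrev stmt7f : Polynomial ℂ := X * (X + C (b + 1)) * (X + C (b - 1))

abbrev stmt7L := Localization.Away (stmt7f b)

abbrev stmt7g : Polynomial ℂ := (X + C (b + 1)) * (X + C (b - 1))

abbrev stmt7q : Polynomial ℂ := X ^ 2 - C (b ^ 2 - 1)

def mkA : Polynomial (LaurentPolynomial ℂ) →ₐ[ℂ] stmt7A b :=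
  Ideal.Quotient.mkₐ ℂ _

def tA : stmt7A b := mkA b (C (T 1))
def tA' : stmt7A b := mkA b (C (T (-1)))
def uA : stmt7A b := mkA b X
def vA : stmt7A b := uA b + tA b - (algebraMap ℂ (stmt7A b) : ℂ →+* stmt7A b) b

lemma tt' : tA b * tA' b = 1 := by
  have h : (T 1 : LaurentPolynomial ℂ) * T (-1) = 1 := by
    rw [← LaurentPolynomial.T_add]; norm_num [LaurentPolynomial.T_zero]
  rw [tA, tA', ← map_mul, ← C_mul, h, map_one, map_one]

lemma hu2 : uA b ^ 2 = tA b ^ 2 - 2 * (algebraMap ℂ (stmt7A b) : ℂ →+* stmt7A b) b * tA b + 1 := by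
  have hmem : ((X : Polynomial (LaurentPolynomial ℂ)) ^ 2 -
      C (Polynomial.toLaurent (X ^ 2 - C (2 * b) * X + 1))) ∈
      Ideal.span {(X : Polynomial (LaurentPolynomial ℂ)) ^ 2 -
        C (Polynomial.toLaurent (X ^ 2 - C (2 * b) * X + 1))} :=
    Ideal.subset_span rfl
  have h0 : mkA b ((X : Polynomial (LaurentPolynomial ℂ)) ^ 2 -
      C (Polynomial.toLaurent (X ^ 2 - C (2 * b) * X + 1))) = 0 := by
    show Ideal.Quotient.mk _ _ = 0
    exact Ideal.Quotient.eq_zero_iff_mem.mpr hmem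
  have hexp : (Polynomial.toLaurent (X ^ 2 - C (2 * b) * X + 1)) =
      T 1 * T 1 - LaurentPolynomial.C (2 * b) * T 1 + 1 := by
    simp [Polynomial.toLaurent_X, Polynomial.toLaurent_C, sq]
  have hCC : mkA b (C (LaurentPolynomial.C (2 * b))) = 2 * (algebraMap ℂ (stmt7A b) : ℂ →+* stmt7A b) b := by
    rw [LaurentPolynomial.C_eq_algebraMap, ← Polynomial.algebraMap_apply,
      AlgHom.commutes, map_mul, map_ofNat]
  have hCexp : (C (T 1 * T 1 - LaurentPolynomial.C (2 * b) * T 1 + 1) :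
      Polynomial (LaurentPolynomial ℂ)) =
      C (T 1) * C (T 1) - C (LaurentPolynomial.C (2 * b)) * C (T 1) + 1 := by
    simp only [C_add, C_sub, C_mul, C_1]
  have h0' : mkA b ((X : Polynomial (LaurentPolynomial ℂ)) ^ 2 -
      (C (T 1) * C (T 1) - C (LaurentPolynomial.C (2 * b)) * C (T 1) + 1)) = 0 := by
    rw [← hCexp, ← hexp]; exact h0
  rw [map_sub (mkA b), map_pow (mkA b), map_add (mkA b), map_sub (mkA b), map_mul (mkA b), map_mul (mkA b), map_one (mkA b), hCC] at h0'
  have hkey := sub_eq_zero.mp h0'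
  rw [uA, tA]
  rw [hkey]; ring

-- The localization side
def aL : Polynomial ℂ →ₐ[ℂ] stmt7L b := IsScalarTower.toAlgHom ℂ _ _

lemma aLC (c : ℂ) : aL b (C c) = algebraMap ℂ (stmt7L b) c := by
  rw [← Polynomial.algebraMap_eq]; exact (aL b).commutes c

lemma aL_eq (p : Polynomial ℂ) : aL b p = algebraMap (Polynomial ℂ) (stmt7L b) p := rfl

lemma hX0 : IsUnit (aL b X) :=
  IsLocalization.Away.isUnit_of_dvd (stmt7f b) ⟨(X + C (b + 1)) * (X + C (b - 1)), by ring⟩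

lemma hX1 : IsUnit (aL b (X + C (b + 1))) :=
  IsLocalization.Away.isUnit_of_dvd (stmt7f b) ⟨X * (X + C (b - 1)), by ring⟩

lemma hX2 : IsUnit (aL b (X + C (b - 1))) :=
  IsLocalization.Away.isUnit_of_dvd (stmt7f b) ⟨X * (X + C (b + 1)), by ring⟩

lemma hW : IsUnit (aL b (C 2 * X)) := by
  rw [map_mul]
  refine IsUnit.mul ?_ (hX0 b)
  rw [aLC]
  exact (isUnit_iff_ne_zero.mpr (two_ne_zero)).map _

def Wu : (stmt7L b)ˣ := (hW b).unit

lemma Wval : ((Wu b : (stmt7L b)ˣ) : stmt7L b) = aL b (C 2 * X) := (hW b).unit_spec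

lemma cancelW {x y : stmt7L b} (h : x * (Wu b : (stmt7L b)ˣ) = y * (Wu b : (stmt7L b)ˣ)) :
    x = y :=
  (Units.mul_left_inj (Wu b)).mp h

def τ : stmt7L b := aL b (stmt7g b) * ((Wu b)⁻¹ : (stmt7L b)ˣ)
def υ : stmt7L b := aL b (stmt7q b) * ((Wu b)⁻¹ : (stmt7L b)ˣ)

lemma τW : τ b * (Wu b : (stmt7L b)ˣ) = aL b (stmt7g b) := by
  rw [τ, mul_assoc, Units.inv_mul, mul_one]

lemma υW : υ b * (Wu b : (stmt7L b)ˣ) = aL b (stmt7q b) := by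
  rw [υ, mul_assoc, Units.inv_mul, mul_one]

lemma hτu : IsUnit (τ b) := by
  rw [τ, stmt7g, map_mul]
  exact ((hX1 b).mul (hX2 b)).mul (Units.isUnit _)

def Tu : (stmt7L b)ˣ := (hτu b).unit

lemma Tuval : ((Tu b : (stmt7L b)ˣ) : stmt7L b) = τ b := (hτu b).unit_spec

def φL : LaurentPolynomial ℂ →ₐ[ℂ] stmt7L b :=
  AddMonoidAlgebra.lift ℂ (stmt7L b) ℤ
    ((Units.coeHom (stmt7L b)).comp (zpowersHom (stmt7L b)ˣ (Tu b)))

lemma φL_T (n : ℤ) : φL b (T n) = ((Tu b ^ n : (stmt7L b)ˣ) : stmt7L b) := by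
  rw [φL]
  have h := AddMonoidAlgebra.lift_single
    ((Units.coeHom (stmt7L b)).comp (zpowersHom (stmt7L b)ˣ (Tu b))) n (1 : ℂ)
  rw [show (T n : LaurentPolynomial ℂ) = AddMonoidAlgebra.single n (1 : ℂ) from rfl, h,
    one_smul]
  rfl

lemma φL_T1 : φL b (T 1) = τ b := by
  rw [φL_T, zpow_one, Tuval]

lemma φL_Tneg1 : φL b (T (-1)) = ((Tu b)⁻¹ : (stmt7L b)ˣ) := by
  rw [φL_T, zpow_neg_one]

def φ0 : Polynomial (LaurentPolynomial ℂ) →ₐ[ℂ] stmt7L b :=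
  aevalTower (φL b) (υ b)

lemma φL_toLaurent (p : Polynomial ℂ) : φL b (Polynomial.toLaurent p) = aeval (τ b) p := by
  have h : (φL b).comp Polynomial.toLaurentAlg = aeval (τ b) := by
    apply Polynomial.algHom_ext
    rw [AlgHom.comp_apply, Polynomial.toLaurentAlg_apply, Polynomial.toLaurent_X, φL_T1, aeval_X]
  have hp := DFunLike.congr_fun h p
  rw [AlgHom.comp_apply, Polynomial.toLaurentAlg_apply] at hp
  exact hp

lemma key_quad : υ b ^ 2 = τ b ^ 2 - algebraMap ℂ (stmt7L b) (2 * b) * τ b + 1 := by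
  refine cancelW b (cancelW b ?_)
  have l1 : υ b ^ 2 * (Wu b : (stmt7L b)ˣ) * (Wu b : (stmt7L b)ˣ) =
      (υ b * (Wu b : (stmt7L b)ˣ)) * (υ b * (Wu b : (stmt7L b)ˣ)) := by ring
  have l2 : (τ b ^ 2 - algebraMap ℂ (stmt7L b) (2 * b) * τ b + 1) * (Wu b : (stmt7L b)ˣ) *
      (Wu b : (stmt7L b)ˣ) =
      (τ b * (Wu b : (stmt7L b)ˣ)) * (τ b * (Wu b : (stmt7L b)ˣ)) -
        algebraMap ℂ (stmt7L b) (2 * b) * (τ b * (Wu b : (stmt7L b)ˣ)) *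
          (Wu b : (stmt7L b)ˣ) +
        (Wu b : (stmt7L b)ˣ) * (Wu b : (stmt7L b)ˣ) := by ring
  rw [l1, l2, υW, τW, Wval, ← aLC b (2 * b)]
  have hpoly : stmt7q b * stmt7q b =
      stmt7g b * stmt7g b - C (2 * b) * (stmt7g b * (C 2 * X)) + (C 2 * X) * (C 2 * X) := by
    simp only [stmt7q, stmt7g, C_add, C_sub, C_mul, C_pow, C_1, map_ofNat]
    ring
  calc aL b (stmt7q b) * aL b (stmt7q b) = aL b (stmt7q b * stmt7q b) := by rw [map_mul]
    _ = aL b (stmt7g b * stmt7g b - C (2 * b) * (stmt7g b * (C 2 * X)) +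
          (C 2 * X) * (C 2 * X)) := by rw [hpoly]
    _ = _ := by simp only [map_add, map_sub, map_mul]; ring

lemma keyrel : φ0 b ((X : Polynomial (LaurentPolynomial ℂ)) ^ 2 -
    C (Polynomial.toLaurent (X ^ 2 - C (2 * b) * X + 1))) = 0 := by
  rw [map_sub, map_pow, φ0, aevalTower_X, aevalTower_C, φL_toLaurent, key_quad]
  simp only [map_add, map_sub, map_mul, map_pow, map_one, aeval_X, aeval_C]
  ring

def φA : stmt7A b →ₐ[ℂ] stmt7L b :=
  Ideal.Quotient.liftₐ _ (φ0 b) (by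
    intro a ha
    rw [Ideal.mem_span_singleton] at ha
    obtain ⟨c, rfl⟩ := ha
    rw [map_mul, keyrel, zero_mul])

lemma φA_mk (x : Polynomial (LaurentPolynomial ℂ)) : φA b (mkA b x) = φ0 b x := by
  rw [φA, mkA, Ideal.Quotient.mkₐ_eq_mk, Ideal.Quotient.liftₐ_apply]
  rfl

lemma φA_t : φA b (tA b) = τ b := by
  rw [tA, φA_mk, φ0, aevalTower_C, φL_T1]

lemma φA_t' : φA b (tA' b) = ((Tu b)⁻¹ : (stmt7L b)ˣ) := by
  rw [tA', φA_mk, φ0, aevalTower_C, φL_Tneg1]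

lemma φA_u : φA b (uA b) = υ b := by
  rw [uA, φA_mk, φ0, aevalTower_X]

lemma key_lin : υ b + τ b - algebraMap ℂ (stmt7L b) b = aL b X := by
  refine cancelW b ?_
  have l1 : (υ b + τ b - algebraMap ℂ (stmt7L b) b) * (Wu b : (stmt7L b)ˣ) =
      υ b * (Wu b : (stmt7L b)ˣ) + τ b * (Wu b : (stmt7L b)ˣ) -
        algebraMap ℂ (stmt7L b) b * (Wu b : (stmt7L b)ˣ) := by ring
  rw [l1, υW, τW, Wval, ← aLC b b]
  have hpoly : stmt7q b + stmt7g b - C b * (C 2 * X) = X * (C 2 * X) := by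
    simp only [stmt7q, stmt7g, C_add, C_sub, C_mul, C_pow, C_1, map_ofNat]
    ring
  calc aL b (stmt7q b) + aL b (stmt7g b) - aL b (C b) * aL b (C 2 * X)
      = aL b (stmt7q b + stmt7g b - C b * (C 2 * X)) := by
        simp only [map_add, map_sub, map_mul]
    _ = aL b (X * (C 2 * X)) := by rw [hpoly]
    _ = _ := by rw [map_mul]

-- Units on the quotient side
lemma htu : IsUnit (tA b) := isUnit_of_dvd_one ⟨tA' b, (tt' b).symm⟩

lemma hvu (hb : b ≠ 1) (hb' : b ≠ -1) : IsUnit (vA b) := by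
  have hne : (1 : ℂ) - b ^ 2 ≠ 0 := by
    intro h
    have h2 : (1 - b) * (1 + b) = 0 := by linear_combination h
    rcases mul_eq_zero.mp h2 with h1 | h1
    · exact hb (by linear_combination -h1)
    · exact hb' (by linear_combination h1)
  have hmul : vA b * (uA b - tA b + (algebraMap ℂ (stmt7A b) : ℂ →+* stmt7A b) b) =
      (algebraMap ℂ (stmt7A b) : ℂ →+* stmt7A b) (1 - b ^ 2) := by
    rw [map_sub, map_one, map_pow, vA]
    linear_combination hu2 b
  have hunit : IsUnit ((algebraMap ℂ (stmt7A b) : ℂ →+* stmt7A b) (1 - b ^ 2)) :=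
    (isUnit_iff_ne_zero.mpr hne).map _
  exact isUnit_of_dvd_unit ⟨uA b - tA b + (algebraMap ℂ (stmt7A b) : ℂ →+* stmt7A b) b, hmul.symm⟩ hunit

lemma hU1 (hb' : b ≠ -1) : IsUnit (uA b + tA b + 1) := by
  have hmul : (uA b + tA b + 1) * (tA b + 1 - uA b) =
      (algebraMap ℂ (stmt7A b) : ℂ →+* stmt7A b) (2 * (1 + b)) * tA b := by
    rw [map_mul ((algebraMap ℂ (stmt7A b) : ℂ →+* stmt7A b)), map_add ((algebraMap ℂ (stmt7A b) : ℂ →+* stmt7A b)),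
      map_one ((algebraMap ℂ (stmt7A b) : ℂ →+* stmt7A b)), map_ofNat ((algebraMap ℂ (stmt7A b) : ℂ →+* stmt7A b))]
    linear_combination -hu2 b
  have hne : (2 : ℂ) * (1 + b) ≠ 0 := by
    intro h
    rcases mul_eq_zero.mp h with h1 | h1
    · exact two_ne_zero h1
    · exact hb' (by linear_combination h1)
  have hunit : IsUnit ((algebraMap ℂ (stmt7A b) : ℂ →+* stmt7A b) (2 * (1 + b)) * tA b) :=
    ((isUnit_iff_ne_zero.mpr hne).map _).mul (htu b)
  exact isUnit_of_dvd_unit ⟨tA b + 1 - uA b, hmul.symm⟩ hunit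

lemma hU2 (hb : b ≠ 1) : IsUnit (uA b + tA b - 1) := by
  have hmul : (uA b + tA b - 1) * (tA b - 1 - uA b) =
      (algebraMap ℂ (stmt7A b) : ℂ →+* stmt7A b) (2 * (b - 1)) * tA b := by
    rw [map_mul ((algebraMap ℂ (stmt7A b) : ℂ →+* stmt7A b)), map_sub ((algebraMap ℂ (stmt7A b) : ℂ →+* stmt7A b)),
      map_one ((algebraMap ℂ (stmt7A b) : ℂ →+* stmt7A b)), map_ofNat ((algebraMap ℂ (stmt7A b) : ℂ →+* stmt7A b))]
    linear_combination -hu2 b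
  have hne : (2 : ℂ) * (b - 1) ≠ 0 := by
    intro h
    rcases mul_eq_zero.mp h with h1 | h1
    · exact two_ne_zero h1
    · exact hb (by linear_combination h1)
  have hunit : IsUnit ((algebraMap ℂ (stmt7A b) : ℂ →+* stmt7A b) (2 * (b - 1)) * tA b) :=
    ((isUnit_iff_ne_zero.mpr hne).map _).mul (htu b)
  exact isUnit_of_dvd_unit ⟨tA b - 1 - uA b, hmul.symm⟩ hunit

lemma hψf (hb : b ≠ 1) (hb' : b ≠ -1) : IsUnit (aeval (vA b) (stmt7f b)) := by
  have h : aeval (vA b) (stmt7f b) = vA b * (uA b + tA b + 1) * (uA b + tA b - 1) := by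
    simp only [stmt7f, map_mul, map_add, aeval_X, aeval_C, map_one, map_sub, vA]
    ring
  rw [h]
  exact ((hvu b hb hb').mul (hU1 b hb')).mul (hU2 b hb)

def ψA (hb : b ≠ 1) (hb' : b ≠ -1) : stmt7L b →ₐ[ℂ] stmt7A b :=
  IsLocalization.liftAlgHom (M := Submonoid.powers (stmt7f b)) (S := stmt7L b) (P := stmt7A b)
    (f := (aeval (vA b) : Polynomial ℂ →ₐ[ℂ] stmt7A b)) (by
      rintro ⟨y, n, rfl⟩
      show IsUnit (aeval (vA b) (stmt7f b ^ n))
      rw [map_pow]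
      exact (hψf b hb hb').pow n)

lemma ψA_alg (hb : b ≠ 1) (hb' : b ≠ -1) (p : Polynomial ℂ) :
    ψA b hb hb' (algebraMap (Polynomial ℂ) (stmt7L b) p) = aeval (vA b) p := by
  rw [ψA, IsLocalization.liftAlgHom_apply]
  exact IsLocalization.lift_eq _ _

lemma idg : aeval (vA b) (stmt7g b) = 2 * tA b * vA b := by
  simp only [stmt7g, map_mul, map_add, aeval_X, aeval_C, map_one, map_sub]
  simp only [vA]
  linear_combination hu2 b

lemma idq : aeval (vA b) (stmt7q b) = 2 * uA b * vA b := by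
  simp only [stmt7q, map_mul, map_add, aeval_X, aeval_C, map_one, map_sub, map_pow]
  simp only [vA]
  linear_combination -hu2 b

lemma ψW (hb : b ≠ 1) (hb' : b ≠ -1) :
    ψA b hb hb' ((Wu b : (stmt7L b)ˣ) : stmt7L b) = 2 * vA b := by
  rw [Wval, aL_eq, ψA_alg]
  simp only [map_mul, aeval_X, aeval_C, map_ofNat]

lemma cancel2v (hb : b ≠ 1) (hb' : b ≠ -1) {x y : stmt7A b}
    (h : x * (2 * vA b) = y * (2 * vA b)) : x = y := by
  have h2unit : IsUnit ((2 : stmt7A b)) := by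
    have := (isUnit_iff_ne_zero.mpr (two_ne_zero (α := ℂ))).map ((algebraMap ℂ (stmt7A b) : ℂ →+* stmt7A b))
    rwa [map_ofNat] at this
  have hv2 : IsUnit (2 * vA b) := h2unit.mul (hvu b hb hb')
  refine (Units.mul_left_inj hv2.unit).mp ?_
  rw [IsUnit.unit_spec]
  exact h

lemma ψτ (hb : b ≠ 1) (hb' : b ≠ -1) : ψA b hb hb' (τ b) = tA b := by
  apply cancel2v b hb hb'
  have h : ψA b hb hb' (τ b) * (2 * vA b) = aeval (vA b) (stmt7g b) := by
    have hinv : ψA b hb hb' (((Wu b)⁻¹ : (stmt7L b)ˣ) : stmt7L b) *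
        ψA b hb hb' ((Wu b : (stmt7L b)ˣ) : stmt7L b) = 1 := by
      rw [← map_mul (ψA b hb hb'), Units.inv_mul, map_one (ψA b hb hb')]
    rw [← ψW b hb hb', τ, map_mul (ψA b hb hb'),
      mul_assoc (ψA b hb hb' (aL b (stmt7g b))), hinv,
      mul_one (ψA b hb hb' (aL b (stmt7g b))), aL_eq, ψA_alg]
  rw [h, idg b]
  ring

lemma ψυ (hb : b ≠ 1) (hb' : b ≠ -1) : ψA b hb hb' (υ b) = uA b := by
  apply cancel2v b hb hb'
  have h : ψA b hb hb' (υ b) * (2 * vA b) = aeval (vA b) (stmt7q b) := by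
    have hinv : ψA b hb hb' (((Wu b)⁻¹ : (stmt7L b)ˣ) : stmt7L b) *
        ψA b hb hb' ((Wu b : (stmt7L b)ˣ) : stmt7L b) = 1 := by
      rw [← map_mul (ψA b hb hb'), Units.inv_mul, map_one (ψA b hb hb')]
    rw [← ψW b hb hb', υ, map_mul (ψA b hb hb'),
      mul_assoc (ψA b hb hb' (aL b (stmt7q b))), hinv,
      mul_one (ψA b hb hb' (aL b (stmt7q b))), aL_eq, ψA_alg]
  rw [h, idq b]
  ring

lemma ψt' (hb : b ≠ 1) (hb' : b ≠ -1) :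
    ψA b hb hb' (((Tu b)⁻¹ : (stmt7L b)ˣ) : stmt7L b) = tA' b := by
  have h1 : ψA b hb hb' (((Tu b)⁻¹ : (stmt7L b)ˣ) : stmt7L b) * tA b = 1 := by
    rw [← ψτ b hb hb', ← Tuval, ← map_mul (ψA b hb hb'), Units.inv_mul,
      map_one (ψA b hb hb')]
  have h2 : tA' b * tA b = 1 := by rw [mul_comm (tA' b) (tA b)]; exact tt' b
  refine (Units.mul_left_inj (htu b).unit).mp ?_
  rw [IsUnit.unit_spec, h1, h2]

lemma φA_v : φA b (vA b) = aL b X := by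
  rw [vA, map_sub, map_add, φA_u, φA_t, AlgHom.commutes]
  exact key_lin b

lemma comp1 (hb : b ≠ 1) (hb' : b ≠ -1) : ∀ x, φA b (ψA b hb hb' x) = x := by
  have hXc2 : (φA b).comp (Polynomial.aeval (vA b)) =
      IsScalarTower.toAlgHom ℂ (Polynomial ℂ) (stmt7L b) := by
    apply Polynomial.algHom_ext
    rw [AlgHom.comp_apply, aeval_X, φA_v]
    rfl
  have hring : (φA b).toRingHom.comp (ψA b hb hb').toRingHom = RingHom.id (stmt7L b) := by
    apply IsLocalization.ringHom_ext (Submonoid.powers (stmt7f b))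
    refine RingHom.ext fun p => ?_
    simp only [RingHom.comp_apply, RingHom.id_apply]
    show φA b (ψA b hb hb' (algebraMap (Polynomial ℂ) (stmt7L b) p)) =
      algebraMap (Polynomial ℂ) (stmt7L b) p
    rw [ψA_alg]
    have hp := DFunLike.congr_fun hXc2 p
    rw [AlgHom.comp_apply] at hp
    rw [hp]
    rfl
  intro x
  exact DFunLike.congr_fun hring x

lemma comp2 (hb : b ≠ 1) (hb' : b ≠ -1) : ∀ x, ψA b hb hb' (φA b x) = x := by
  have hc : ((ψA b hb hb').comp (φA b)).comp (mkA b) = mkA b := by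
    apply Polynomial.algHom_ext'
    · apply stmt7_laurent_algHom_ext (A := stmt7A b)
      · show ψA b hb hb' (φA b (tA b)) = tA b
        rw [φA_t, ψτ]
      · show ψA b hb hb' (φA b (tA' b)) = tA' b
        rw [φA_t', ψt']
    · show ψA b hb hb' (φA b (uA b)) = uA b
      rw [φA_u, ψυ]
  intro x
  obtain ⟨y, rfl⟩ := Ideal.Quotient.mkₐ_surjective ℂ _ x
  exact DFunLike.congr_fun hc y

end Stmt7Aux

/-- For `P(t) = t² - 2bt + 1` with `b ≠ ±1`, `R_2(P)` is isomorphic as a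
ℂ-algebra to `ℂ[s, s⁻¹, (s+b+1)⁻¹, (s+b-1)⁻¹]`, realized as the localization of
`ℂ[s]` away from `s(s+b+1)(s+b-1)`. -/
theorem stmt_7 (b : ℂ) (hb : b ≠ 1) (hb' : b ≠ -1) :
    Nonempty
      ((Polynomial (LaurentPolynomial ℂ) ⧸
          Ideal.span {(X : Polynomial (LaurentPolynomial ℂ)) ^ 2 -
            C (Polynomial.toLaurent (X ^ 2 - C (2 * b) * X + 1))}) ≃ₐ[ℂ]
        Localization.Away ((X * (X + C (b + 1)) * (X + C (b - 1))) : Polynomial ℂ)) :=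
  ⟨AlgEquiv.ofAlgHom (φA b) (ψA b hb hb')
    (AlgHom.ext (comp1 b hb hb')) (AlgHom.ext (comp2 b hb hb'))⟩
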